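/- Let R be a commutative ring and A an R-algebra that is finitely generated as an R-module, and suppose the structure map R → A is injective. Then the induced map on spectra is surjective: for every prime ideal p of R there exists a prime two-sided ideal q of A whose preimage under R → A is p. -/

import Mathlib

/-- A subset `I` of a ring `B` is a two-sided ideal: it contains `0`, is closed under
addition, and is closed under multiplication by arbitrary ring elements on both sides. -/
def IsTwoSidedIdealSet {B : Type*} [Ring B] (I : Set B) : Prop :=
  (0 : B) ∈ I ∧ (∀ a ∈ I, ∀ b ∈ I, a + b ∈ I) ∧
    (∀ (x : B), ∀ a ∈ I, x * a ∈ I) ∧ (∀ (x : B), ∀ a ∈ I, a * x ∈ I)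

/-- A subset `I` of a ring `B` is a prime two-sided ideal: it is a proper two-sided ideal
such that whenever `a * x * b ∈ I` for all `x`, either `a ∈ I` or `b ∈ I`. -/
def IsPrimeTwoSidedIdeal {B : Type*} [Ring B] (I : Set B) : Prop :=
  IsTwoSidedIdealSet I ∧ I ≠ Set.univ ∧
    ∀ a b : B, (∀ x : B, a * x * b ∈ I) → a ∈ I ∨ b ∈ I

/-- Let `R` be a commutative ring and `A` an `R`-algebra which is finitely generated as an
`R`-module, with injective structure map `R → A`. Then the induced map on spectra is
surjective: every prime ideal of `R` is the preimage of a prime two-sided ideal of `A`. -/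
theorem spec_map_surjective_of_injective {R A : Type*} [CommRing R] [Ring A] [Algebra R A]
    [Module.Finite R A] (hinj : Function.Injective (algebraMap R A))
    (p : Ideal R) (hp : p.IsPrime) :
    ∃ q : Set A, IsPrimeTwoSidedIdeal q ∧ ⇑(algebraMap R A) ⁻¹' q = (p : Set R) := by
  classical
  set φ := algebraMap R A with hφ
  set P0 : Submodule R A := p • (⊤ : Submodule R A) with hP0
  -- `P0` is closed under multiplication on both sides
  have hP0left : ∀ x : A, ∀ a ∈ P0, x * a ∈ P0 := by
    intro x a ha
    refine Submodule.smul_induction_on ha (fun r hr n _ => ?_) (fun a b ha hb => ?_)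
    · have : x * (r • n) = r • (x * n) := by rw [mul_smul_comm]
      rw [this]
      exact Submodule.smul_mem_smul hr Submodule.mem_top
    · rw [mul_add]; exact P0.add_mem ha hb
  have hP0right : ∀ x : A, ∀ a ∈ P0, a * x ∈ P0 := by
    intro x a ha
    refine Submodule.smul_induction_on ha (fun r hr n _ => ?_) (fun a b ha hb => ?_)
    · have : (r • n) * x = r • (n * x) := by rw [smul_mul_assoc]
      rw [this]
      exact Submodule.smul_mem_smul hr Submodule.mem_top
    · rw [add_mul]; exact P0.add_mem ha hb
  -- Key lemma via Cayley–Hamilton: for `s ∉ p`, `φ s ∉ P0`.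
  have key : ∀ s : R, s ∉ p → φ s ∉ (P0 : Set A) := by
    intro s hs hmem
    set f : Module.End R A := algebraMap R (Module.End R A) s with hf
    have hrange : LinearMap.range f ≤ p • (⊤ : Submodule R A) := by
      rintro _ ⟨x, rfl⟩
      have hfx : f x = x * φ s := by
        rw [hf, Module.algebraMap_end_apply, Algebra.smul_def, ← Algebra.commutes]
      rw [hfx]
      exact hP0left x _ hmem
    obtain ⟨g, hg_monic, -, hg_coeff, hg_eval⟩ :=
      LinearMap.exists_monic_and_coeff_mem_pow_and_aeval_eq_zero_of_range_le_smul R f p hrange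
    have h1 : algebraMap R (Module.End R A) (g.eval s) = 0 := by
      rw [← Polynomial.aeval_algebraMap_apply_eq_algebraMap_eval, ← hf, hg_eval]
    have h2 : φ (g.eval s) = 0 := by
      have h := congrArg (fun (f : Module.End R A) => f (1 : A)) h1
      simp only [Module.algebraMap_end_apply, LinearMap.zero_apply] at h
      rw [hφ, Algebra.algebraMap_eq_smul_one]
      exact h
    have h3 : g.eval s = 0 := by
      apply hinj
      rw [h2, map_zero]
    -- extract `s ^ n ∈ p`
    set n := g.natDegree with hn
    have heval : g.eval s = ∑ i ∈ Finset.range (n + 1), g.coeff i * s ^ i := by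
      rw [Polynomial.eval_eq_sum_range]
    have hsum : s ^ n + ∑ i ∈ Finset.range n, g.coeff i * s ^ i = 0 := by
      have : g.eval s = g.coeff n * s ^ n + ∑ i ∈ Finset.range n, g.coeff i * s ^ i := by
        rw [heval, Finset.sum_range_succ, add_comm]
      rw [this, hg_monic.coeff_natDegree, one_mul] at h3
      exact h3
    have hpow : s ^ n ∈ p := by
      have heq : s ^ n = -∑ i ∈ Finset.range n, g.coeff i * s ^ i :=
        eq_neg_of_add_eq_zero_left hsum
      rw [heq]
      refine p.neg_mem (Ideal.sum_mem p fun i hi => p.mul_mem_right _ ?_)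
      have hi' : i < n := Finset.mem_range.1 hi
      exact Ideal.pow_le_self (by omega : n - i ≠ 0) (hg_coeff i)
    exact hs (hp.mem_of_pow_mem n hpow)
  -- Zorn's lemma: maximal two-sided ideal containing `P0` and avoiding `φ (R \ p)`
  set 𝒮 : Set (Set A) :=
    {q | IsTwoSidedIdealSet q ∧ (P0 : Set A) ⊆ q ∧ ∀ s : R, s ∉ p → φ s ∉ q} with h𝒮
  have hbase : (P0 : Set A) ∈ 𝒮 := by
    refine ⟨⟨P0.zero_mem, fun a ha b hb => P0.add_mem ha hb, hP0left, hP0right⟩,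
      subset_rfl, key⟩
  have hub : ∀ c ⊆ 𝒮, IsChain (· ⊆ ·) c → c.Nonempty → ∃ ub ∈ 𝒮, ∀ s ∈ c, s ⊆ ub := by
    intro c hc hchain hcne
    refine ⟨⋃₀ c, ?_, fun s hs => Set.subset_sUnion_of_mem hs⟩
    obtain ⟨q0, hq0c⟩ := hcne
    have hq0S := hc hq0c
    refine ⟨⟨?_, ?_, ?_, ?_⟩, ?_, ?_⟩
    · exact Set.mem_sUnion.2 ⟨q0, hq0c, hq0S.1.1⟩
    · rintro a ⟨qa, hqa, haa⟩ b ⟨qb, hqb, hbb⟩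
      rcases hchain.total hqa hqb with h | h
      · exact ⟨qb, hqb, (hc hqb).1.2.1 a (h haa) b hbb⟩
      · exact ⟨qa, hqa, (hc hqa).1.2.1 a haa b (h hbb)⟩
    · rintro x a ⟨qa, hqa, haa⟩
      exact ⟨qa, hqa, (hc hqa).1.2.2.1 x a haa⟩
    · rintro x a ⟨qa, hqa, haa⟩
      exact ⟨qa, hqa, (hc hqa).1.2.2.2 x a haa⟩
    · exact hq0S.2.1.trans (Set.subset_sUnion_of_mem hq0c)
    · rintro s hs ⟨qa, hqa, haa⟩
      exact (hc hqa).2.2 s hs haa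
  obtain ⟨q, hq0, hqmax⟩ := zorn_subset_nonempty 𝒮 hub _ hbase
  obtain ⟨⟨hqz, hqadd, hql, hqr⟩, hqP0, hqS⟩ := hqmax.1
  have hone : (1 : A) ∉ q := by
    have h1p : (1 : R) ∉ p := fun h => hp.1 (Ideal.eq_top_of_isUnit_mem p h isUnit_one)
    simpa using hqS 1 h1p
  refine ⟨q, ⟨⟨hqz, hqadd, hql, hqr⟩, ?_, ?_⟩, ?_⟩
  · intro h
    exact hone (h ▸ Set.mem_univ (1 : A))
  · -- primality
    intro a b hab
    by_contra hcon
    push_neg at hcon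
    obtain ⟨ha, hb⟩ := hcon
    -- the two-sided ideal generated by `q` and an element `c`
    set T : A → AddSubmonoid A := fun c =>
      AddSubmonoid.closure (q ∪ {z : A | ∃ x y : A, z = x * c * y}) with hT
    have hTq : ∀ c, q ⊆ (T c : Set A) := fun c =>
      (Set.subset_union_left).trans AddSubmonoid.subset_closure
    have hTc : ∀ c : A, c ∈ T c := fun c =>
      AddSubmonoid.subset_closure (Or.inr ⟨1, 1, by simp⟩)
    have hTleft : ∀ c : A, ∀ x : A, ∀ z ∈ T c, x * z ∈ T c := by
      intro c x z hz
      induction hz using AddSubmonoid.closure_induction with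
      | mem t ht =>
        rcases ht with ht | ⟨u, v, rfl⟩
        · exact AddSubmonoid.subset_closure (Or.inl (hql x t ht))
        · exact AddSubmonoid.subset_closure (Or.inr ⟨x * u, v, by simp [mul_assoc]⟩)
      | zero => simpa using (T c).zero_mem
      | add y z _ _ hy hz => rw [mul_add]; exact (T c).add_mem hy hz
    have hTright : ∀ c : A, ∀ x : A, ∀ z ∈ T c, z * x ∈ T c := by
      intro c x z hz
      induction hz using AddSubmonoid.closure_induction with
      | mem t ht =>
        rcases ht with ht | ⟨u, v, rfl⟩
        · exact AddSubmonoid.subset_closure (Or.inl (hqr x t ht))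
        · exact AddSubmonoid.subset_closure (Or.inr ⟨u, v * x, by simp [mul_assoc]⟩)
      | zero => simpa using (T c).zero_mem
      | add y z _ _ hy hz => rw [add_mul]; exact (T c).add_mem hy hz
    -- products of elements of `T a` and `T b` lie in `q`
    have hmul : ∀ s1 ∈ T a, ∀ s2 ∈ T b, s1 * s2 ∈ q := by
      intro s1 hs1
      induction hs1 using AddSubmonoid.closure_induction with
      | mem t ht =>
        intro s2 hs2
        rcases ht with ht | ⟨u, v, rfl⟩
        · exact hqr s2 t ht
        · induction hs2 using AddSubmonoid.closure_induction with
          | mem t2 ht2 =>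
            rcases ht2 with ht2 | ⟨x, y, rfl⟩
            · exact hql (u * a * v) t2 ht2
            · have : u * a * v * (x * b * y) = u * (a * (v * x) * b) * y := by
                simp [mul_assoc]
              rw [this]
              exact hqr y _ (hql u _ (hab (v * x)))
          | zero => simpa using hqz
          | add z w _ _ hz hw => rw [mul_add]; exact hqadd _ hz _ hw
      | zero => intro s2 hs2; simpa using hqz
      | add z w _ _ hz hw =>
        intro s2 hs2
        rw [add_mul]
        exact hqadd _ (hz s2 hs2) _ (hw s2 hs2)
    -- `T a` and `T b` each meet `φ (R \ p)`
    have hmeet : ∀ c : A, c ∉ q → ∃ s : R, s ∉ p ∧ φ s ∈ T c := by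
      intro c hc
      by_contra hno
      push_neg at hno
      have hTS : (T c : Set A) ∈ 𝒮 := by
        refine ⟨⟨(T c).zero_mem, fun x hx y hy => (T c).add_mem hx hy,
          hTleft c, hTright c⟩, hqP0.trans (hTq c), fun s hs => hno s hs⟩
      have := hqmax.2 hTS (hTq c)
      exact hc (this (hTc c))
    obtain ⟨s1, hs1, hs1T⟩ := hmeet a ha
    obtain ⟨s2, hs2, hs2T⟩ := hmeet b hb
    have : φ (s1 * s2) ∈ q := by
      rw [map_mul]
      exact hmul _ hs1T _ hs2T
    exact hqS (s1 * s2) (fun h => (hp.mem_or_mem h).elim hs1 hs2) this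
  · -- the preimage is `p`
    ext r
    constructor
    · intro hr
      by_contra hrp
      exact hqS r hrp hr
    · intro hr
      apply hqP0
      have h1 : r • (1 : A) ∈ P0 := Submodule.smul_mem_smul hr Submodule.mem_top
      simpa [hφ, Algebra.algebraMap_eq_smul_one] using h1
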